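/- Let V ⊆ ℂ be open and let z, θ : V → ℂ be real-differentiable functions satisfying, at every point of V: the conformality relation ∂z·conj(∂̄z) = ∂θ·conj(∂̄θ), the orientation condition |∂z| ≥ |∂̄z|, and the space-like condition |conj(α)·∂θ + α·∂̄θ| < |conj(α)·∂z + α·∂̄z| for every α ∈ ℂ with |α| = 1. Let f : V → ℂ and let F : V → ℂ be real-differentiable with ∂F = f·∂z + conj(f)·∂θ and ∂̄F = f·∂̄z + conj(f)·∂̄θ on V (i.e., F is a primitive of the 1-form f dz + conj(f) dθ). Then ∂z is nowhere zero on V, and F satisfies the conjugate Beltrami equation ∂̄F(ζ) = ν(ζ)·conj(∂F(ζ)) for all ζ ∈ V, where ν := ∂̄θ / conj(∂z) satisfies |ν(ζ)| < 1 for all ζ ∈ V. -/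

import Mathlib

open Complex

/-- The Wirtinger derivative `∂F = ½(∂ₓF - i ∂_yF)`. -/
noncomputable def wirtingerD (F : ℂ → ℂ) (ζ : ℂ) : ℂ :=
  (1 / 2) * (fderiv ℝ F ζ 1 - Complex.I * fderiv ℝ F ζ Complex.I)

/-- The conjugate Wirtinger derivative `∂̄F = ½(∂ₓF + i ∂_yF)`. -/
noncomputable def wirtingerDBar (F : ℂ → ℂ) (ζ : ℂ) : ℂ :=
  (1 / 2) * (fderiv ℝ F ζ 1 + Complex.I * fderiv ℝ F ζ Complex.I)

/-- Any unimodular complex number has a unimodular square root. -/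
lemma exists_unimodular_sqrt (w : ℂ) (hw : ‖w‖ = 1) :
    ∃ α : ℂ, ‖α‖ = 1 ∧ α ^ 2 = w := by
  refine ⟨Complex.exp ((w.arg / 2 : ℝ) * Complex.I), ?_, ?_⟩
  · simpa using Complex.norm_exp_ofReal_mul_I (w.arg / 2)
  · have : ((w.arg / 2 : ℝ) : ℂ) * Complex.I + ((w.arg / 2 : ℝ) : ℂ) * Complex.I
        = (w.arg : ℝ) * Complex.I := by push_cast; ring
    rw [sq, ← Complex.exp_add, this]
    have := Complex.norm_mul_exp_arg_mul_I w
    rwa [hw, ofReal_one, one_mul] at this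

/-- For a conformal orientation-preserving space-like parametrization `(z, θ)`, any
primitive `F` of the 1-form `f dz + conj(f) dθ` satisfies the conjugate Beltrami
equation `∂̄F = ν conj(∂F)` with `ν = ∂̄θ / conj(∂z)` of modulus `< 1`;
moreover `∂z` is nowhere zero. -/
theorem primitive_satisfies_conjugate_beltrami (V : Set ℂ) (hV : IsOpen V)
    (z θ f F : ℂ → ℂ)
    (hz : DifferentiableOn ℝ z V) (hθ : DifferentiableOn ℝ θ V)
    (hF : DifferentiableOn ℝ F V)
    (hconf : ∀ ζ ∈ V, wirtingerD z ζ * (starRingEnd ℂ) (wirtingerDBar z ζ)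
      = wirtingerD θ ζ * (starRingEnd ℂ) (wirtingerDBar θ ζ))
    (horient : ∀ ζ ∈ V, ‖wirtingerDBar z ζ‖ ≤ ‖wirtingerD z ζ‖)
    (hspace : ∀ ζ ∈ V, ∀ α : ℂ, ‖α‖ = 1 →
      ‖(starRingEnd ℂ) α * wirtingerD θ ζ + α * wirtingerDBar θ ζ‖ <
        ‖(starRingEnd ℂ) α * wirtingerD z ζ + α * wirtingerDBar z ζ‖)
    (hdF : ∀ ζ ∈ V, wirtingerD F ζ
      = f ζ * wirtingerD z ζ + (starRingEnd ℂ) (f ζ) * wirtingerD θ ζ)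
    (hdbarF : ∀ ζ ∈ V, wirtingerDBar F ζ
      = f ζ * wirtingerDBar z ζ + (starRingEnd ℂ) (f ζ) * wirtingerDBar θ ζ) :
    ∀ ζ ∈ V, wirtingerD z ζ ≠ 0 ∧
      ‖wirtingerDBar θ ζ / (starRingEnd ℂ) (wirtingerD z ζ)‖ < 1 ∧
      wirtingerDBar F ζ = (wirtingerDBar θ ζ / (starRingEnd ℂ) (wirtingerD z ζ))
        * (starRingEnd ℂ) (wirtingerD F ζ) := by
  intro ζ hζ
  set a := wirtingerD z ζ with ha_def
  set b := wirtingerDBar z ζ with hb_def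
  set c := wirtingerD θ ζ with hc_def
  set d := wirtingerDBar θ ζ with hd_def
  have hc : a * (starRingEnd ℂ) b = c * (starRingEnd ℂ) d := hconf ζ hζ
  have ho : ‖b‖ ≤ ‖a‖ := horient ζ hζ
  -- a ≠ 0
  have ha : a ≠ 0 := by
    intro h
    have hb : b = 0 := by
      have h0 : ‖b‖ ≤ 0 := by simpa [h] using ho
      exact norm_eq_zero.mp (le_antisymm h0 (norm_nonneg b))
    have h1 := hspace ζ hζ 1 (by simp)
    rw [show ((starRingEnd ℂ) 1 * a + 1 * b) = 0 by simp [h, hb]] at h1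
    simp at h1
    exact absurd h1 (not_lt.2 (norm_nonneg _))
  -- |d| < |a|
  have hda : ‖d‖ < ‖a‖ := by
    by_cases hd : d = 0
    · simpa [hd] using (norm_pos_iff.mpr ha)
    by_cases hcz : c = 0
    · -- then b = 0 by conformality
      have hb : b = 0 := by
        have h0 : a * (starRingEnd ℂ) b = 0 := by rw [hc, hcz]; ring
        have := (mul_eq_zero.mp h0).resolve_left ha
        simpa using congrArg (starRingEnd ℂ) this
      have h1 := hspace ζ hζ 1 (by simp)
      rw [show (starRingEnd ℂ) 1 * c + 1 * d = d by rw [hcz]; simp,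
          show (starRingEnd ℂ) 1 * a + 1 * b = a by rw [hb]; simp] at h1
      exact h1
    · -- align c and d
      have habsc : (0:ℝ) < ‖c‖ := norm_pos_iff.mpr hcz
      have habsd : (0:ℝ) < ‖d‖ := norm_pos_iff.mpr hd
      set r : ℝ := ‖d‖ / ‖c‖ with hr_def
      have hw : ‖(c / d) * (r : ℂ)‖ = 1 := by
        rw [norm_mul, norm_div]
        rw [Complex.norm_real, Real.norm_eq_abs, hr_def]
        rw [abs_of_pos (div_pos habsd habsc)]
        field_simp
      obtain ⟨α, hα1, hα2⟩ := exists_unimodular_sqrt _ hw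
      have hαne : α ≠ 0 := by
        intro h; rw [h] at hα1; simp at hα1
      have key : ‖(starRingEnd ℂ) α * c + α * d‖
          = ‖c‖ + ‖d‖ := by
        have hconjα : (starRingEnd ℂ) α = α⁻¹ := by
          rw [Complex.inv_def]
          rw [Complex.normSq_eq_norm_sq, hα1]
          simp
        rw [hconjα]
        have : α⁻¹ * c + α * d = α⁻¹ * (c + α ^ 2 * d) := by
          field_simp
        rw [this, norm_mul, norm_inv, hα1, inv_one, one_mul]
        rw [hα2]
        have : c / d * (r:ℂ) * d = c * (r:ℂ) := by field_simp
        rw [this]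
        have : c + c * (r:ℂ) = c * (1 + (r:ℂ)) := by ring
        rw [this, norm_mul]
        have hr_nonneg : (0:ℝ) ≤ r := le_of_lt (div_pos habsd habsc)
        have : ‖1 + (r:ℂ)‖ = 1 + r := by
          rw [show (1 + (r:ℂ)) = ((1 + r : ℝ) : ℂ) by push_cast; ring, Complex.norm_real, Real.norm_eq_abs]
          exact abs_of_nonneg (by linarith)
        rw [this, hr_def]
        field_simp
      have h1 := hspace ζ hζ α hα1
      rw [key] at h1
      have h2 : ‖(starRingEnd ℂ) α * a + α * b‖
          ≤ ‖a‖ + ‖b‖ := by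
        calc ‖(starRingEnd ℂ) α * a + α * b‖
            ≤ ‖(starRingEnd ℂ) α * a‖ + ‖α * b‖ :=
              norm_add_le _ _
          _ = ‖a‖ + ‖b‖ := by
              rw [norm_mul, norm_mul, Complex.norm_conj, hα1, one_mul, one_mul]
      have hsum : ‖c‖ + ‖d‖ < ‖a‖ + ‖b‖ :=
        lt_of_lt_of_le h1 h2
      have hprod : ‖a‖ * ‖b‖ = ‖c‖ * ‖d‖ := by
        have := congrArg norm hc
        simpa [norm_mul, Complex.norm_conj] using this
      by_contra hcon
      push_neg at hcon
      have hba : ‖b‖ ≤ ‖d‖ := le_trans ho hcon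
      nlinarith [mul_nonneg (sub_nonneg.2 hcon) (sub_nonneg.2 hba), habsd]
  have hca : (starRingEnd ℂ) a ≠ 0 := by simpa using ha
  refine ⟨ha, ?_, ?_⟩
  · rw [norm_div, Complex.norm_conj]
    exact (div_lt_one (norm_pos_iff.mpr ha)).2 hda
  · rw [hdbarF ζ hζ, hdF ζ hζ]
    have hconj2 : (starRingEnd ℂ) a * b = (starRingEnd ℂ) c * d := by
      have := congrArg (starRingEnd ℂ) hc
      simpa [map_mul] using this
    rw [map_add, map_mul, map_mul]
    simp only [RingHomCompTriple.comp_apply, RingHom.id_apply, Complex.conj_conj]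
    field_simp
    linear_combination f ζ * hconj2
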